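/- arXiv:1012.2563 — 4 statements merged into one kernel-verified Lean document; each statement's English description precedes it below -/
import Mathlib

section
/- Integration by parts for the residue: for all f, g in LaurentSeries ℂ, Res(g * D f) = − Res(f * D g). In particular the bilinear form c(f, g) := Res(g * D f) on LaurentSeries ℂ is antisymmetric. -/
open HahnSeries

/-- The formal derivative of Laurent series, defined coefficientwise by
`(D f).coeff n = (n + 1) • f.coeff (n + 1)`. -/
noncomputable def D : LaurentSeries ℂ →ₗ[ℂ] LaurentSeries ℂ where
  toFun f :=
    { coeff := fun n => (n + 1) • f.coeff (n + 1)
      isPWO_support' := by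
        have hmono : MonotoneOn (fun n : ℤ => n - 1) f.support := by
          intro a _ b _ h
          simpa using sub_le_sub_right h 1
        refine Set.IsPWO.mono (f.isPWO_support.image_of_monotoneOn hmono) ?_
        intro n hn
        have hf : f.coeff (n + 1) ≠ 0 := by
          intro h
          simp [h] at hn
        exact ⟨n + 1, hf, by ring⟩ }
  map_add' f g := by
    ext n
    simp [smul_add]
  map_smul' c f := by
    ext n
    simp
    ring

/-- The residue of a formal Laurent series: the coefficient of `z⁻¹`. -/
noncomputable def Res (f : LaurentSeries ℂ) : ℂ := f.coeff (-1)

open Finset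
lemma D_coeff (f : LaurentSeries ℂ) (n : ℤ) : (D f).coeff n = (n + 1) • f.coeff (n + 1) := rfl

lemma ibp_key (f g : LaurentSeries ℂ) (p : ℤ × ℤ)
    (hp : p ∈ (Finset.antidiagonal g.isPWO_support (D f).isPWO_support (-1)).filter
      (fun ij => g.coeff ij.1 * (D f).coeff ij.2 ≠ 0)) :
    ((-p.1, p.1 - 1) : ℤ × ℤ) ∈ (Finset.antidiagonal f.isPWO_support (D g).isPWO_support (-1)).filter
      (fun ij => f.coeff ij.1 * (D g).coeff ij.2 ≠ 0) ∧
    g.coeff p.1 * (D f).coeff p.2 = - (f.coeff (-p.1) * (D g).coeff (p.1 - 1)) := by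
  obtain ⟨i, j⟩ := p
  rw [Finset.mem_filter, Finset.mem_antidiagonal] at hp
  obtain ⟨⟨hi, hj, hij⟩, hne⟩ := hp
  simp only at hi hij hne ⊢
  have hDf : (D f).coeff j = (j + 1) • f.coeff (j + 1) := rfl
  have hji : j + 1 = -i := by omega
  have hfne : f.coeff (-i) ≠ 0 ∧ (i : ℂ) ≠ 0 := by
    rw [hDf, hji] at hne
    constructor
    · intro h; rw [h] at hne; simp at hne
    · intro h
      have : ((-i : ℤ) : ℂ) = 0 := by push_cast; simp [h]
      rw [zsmul_eq_mul, this] at hne; simp at hne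
  have hi' : g.coeff i ≠ 0 := hi
  have hterm : f.coeff (-i) * (D g).coeff (i - 1) = (i : ℂ) * f.coeff (-i) * g.coeff i := by
    rw [D_coeff]
    have : i - 1 + 1 = i := by ring
    rw [this, zsmul_eq_mul]
    push_cast; ring
  constructor
  · rw [Finset.mem_filter, Finset.mem_antidiagonal]
    refine ⟨⟨hfne.1, ?_, by omega⟩, ?_⟩
    · show (D g).coeff (i - 1) ≠ 0
      rw [D_coeff]
      have : i - 1 + 1 = i := by ring
      rw [this, zsmul_eq_mul]
      exact mul_ne_zero hfne.2 hi'
    · simp only [hterm]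
      exact mul_ne_zero (mul_ne_zero hfne.2 hfne.1) hi'
  · rw [hterm, hDf, hji, zsmul_eq_mul]
    push_cast
    ring

theorem residue_integration_by_parts (f g : LaurentSeries ℂ) :
    Res (g * D f) = - Res (f * D g) := by
  unfold Res
  rw [HahnSeries.coeff_mul, HahnSeries.coeff_mul, eq_neg_iff_add_eq_zero,
    ← Finset.sum_filter_ne_zero (Finset.antidiagonal g.isPWO_support (D f).isPWO_support (-1)),
    ← Finset.sum_filter_ne_zero (Finset.antidiagonal f.isPWO_support (D g).isPWO_support (-1))]
  have hmain : ∑ p ∈ (Finset.antidiagonal g.isPWO_support (D f).isPWO_support (-1)).filter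
      (fun ij => g.coeff ij.1 * (D f).coeff ij.2 ≠ 0), g.coeff p.1 * (D f).coeff p.2
      = ∑ q ∈ (Finset.antidiagonal f.isPWO_support (D g).isPWO_support (-1)).filter
      (fun ij => f.coeff ij.1 * (D g).coeff ij.2 ≠ 0), - (f.coeff q.1 * (D g).coeff q.2) := by
    refine Finset.sum_nbij' (fun p => (-p.1, p.1 - 1)) (fun q => (-q.1, q.1 - 1))
      (fun p hp => (ibp_key f g p hp).1) (fun q hq => (ibp_key g f q hq).1) ?_ ?_
      (fun p hp => (ibp_key f g p hp).2)
    · intro p hp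
      rw [Finset.mem_filter, Finset.mem_antidiagonal] at hp
      have : p.1 + p.2 = -1 := hp.1.2.2
      ext <;> simp <;> omega
    · intro q hq
      rw [Finset.mem_filter, Finset.mem_antidiagonal] at hq
      have : q.1 + q.2 = -1 := hq.1.2.2
      ext <;> simp <;> omega
  rw [hmain, Finset.sum_neg_distrib]
  exact neg_add_cancel _
end

section
/- Coefficient formula for the cocycle: for all f, g in LaurentSeries ℂ, Res(g * D f) = Σᶠ n : ℤ, n • (f.coeff n * g.coeff (−n)), where the finsum has only finitely many nonzero terms since the supports of f and g are bounded below. -/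
open HahnSeries

theorem cocycle_coeff_formula (f g : LaurentSeries ℂ) :
    Res (g * D f) = ∑ᶠ n : ℤ, n • (f.coeff n * g.coeff (-n)) := by
  classical
  set h : ℤ → ℂ := fun n => n • (f.coeff n * g.coeff (-n)) with hh
  set s := Finset.antidiagonal g.isPWO_support (D f).isPWO_support (-1) with hs
  set t := s.image (fun ij => ij.2 + 1) with ht
  have hsub : Function.support h ⊆ ↑t := by
    intro n hn
    have hn' : h n ≠ 0 := hn
    have hne : n ≠ 0 ∧ f.coeff n ≠ 0 ∧ g.coeff (-n) ≠ 0 := by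
      by_contra hc
      push_neg at hc
      simp only [hh, ne_eq] at hn'
      by_cases h0 : n = 0
      · simp [h0] at hn'
      by_cases h1 : f.coeff n = 0
      · simp [h1] at hn'
      · simp [hc h0 h1] at hn'
    obtain ⟨h0, h1, h2⟩ := hne
    have hDf : (D f).coeff (n - 1) ≠ 0 := by
      show ((n - 1 : ℤ) + 1) • f.coeff (n - 1 + 1) ≠ 0
      simp only [sub_add_cancel]
      simp [smul_eq_zero, h0, h1]
    have hmem : ((-n, n - 1) : ℤ × ℤ) ∈ s := by
      rw [hs, Finset.mem_addAntidiagonal]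
      exact ⟨h2, hDf, by ring⟩
    simp only [ht, Finset.coe_image, Set.mem_image, Finset.mem_coe]
    exact ⟨(-n, n - 1), hmem, by simp⟩
  rw [finsum_eq_finset_sum_of_support_subset h hsub]
  have : Res (g * D f) = ∑ ij ∈ s, g.coeff ij.1 * (D f).coeff ij.2 := by
    rw [Res, HahnSeries.coeff_mul]
  rw [this, ht, Finset.sum_image]
  · refine Finset.sum_congr rfl ?_
    intro ij hij
    rw [hs, Finset.mem_addAntidiagonal] at hij
    have h1 : ij.1 = -(ij.2 + 1) := by linarith [hij.2.2]
    show g.coeff ij.1 * (D f).coeff ij.2 = (ij.2 + 1) • (f.coeff (ij.2 + 1) * g.coeff (-(ij.2 + 1)))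
    rw [h1]
    show g.coeff (-(ij.2 + 1)) * ((ij.2 + 1) • f.coeff (ij.2 + 1)) = _
    rw [zsmul_eq_mul, zsmul_eq_mul]
    push_cast
    ring
  · intro a ha b hb hab
    rw [hs, Finset.mem_coe, Finset.mem_addAntidiagonal] at ha hb
    have h2 : a.2 = b.2 := by linarith
    have h1 : a.1 = b.1 := by linarith [ha.2.2, hb.2.2]
    exact Prod.ext h1 h2
end

section
/- The Fock space carries a representation of the Heisenberg commutation relations: define ρ : ℤ → Module.End ℂ (MvPolynomial ℕ+ ℂ) by ρ(n) = the partial derivative ∂/∂x_n for n > 0, ρ(−n) = the operator of multiplication by n • X_n for n > 0, and ρ(0) = 0. Then for all n, m : ℤ, ρ(n) ∘ ρ(m) − ρ(m) ∘ ρ(n) = (if n + m = 0 then (n : ℂ) else 0) • id, i.e. [b_n, b_m] = n δ_{n,−m} · 1. -/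
open MvPolynomial

lemma pderiv_comm' {σ R : Type*} [CommSemiring R] [DecidableEq σ] (i j : σ)
    (p : MvPolynomial σ R) : pderiv i (pderiv j p) = pderiv j (pderiv i p) := by
  induction p using MvPolynomial.induction_on with
  | C a => simp
  | add p q hp hq => simp [hp, hq]
  | mul_X p k h =>
      simp only [pderiv_mul, pderiv_X, map_add, h, Pi.single_apply]
      split_ifs <;> (try simp) <;> ring

lemma pderiv_smulX_comm (a b : ℕ+) (c : ℕ) (p : MvPolynomial ℕ+ ℂ) :
    pderiv a ((c • X b) * p) - (c • X b) * pderiv a p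
      = (if a = b then (c : ℂ) else 0) • p := by
  rw [smul_mul_assoc, map_nsmul, pderiv_mul, pderiv_X, smul_mul_assoc]
  split_ifs with h
  · subst h
    rw [Pi.single_eq_same, one_mul, smul_add, add_sub_cancel_right,
      Nat.cast_smul_eq_nsmul]
  · simp [Pi.single_apply, Ne.symm h]

lemma pderiv_smulX_comm_neg (a b : ℕ+) (c : ℕ) (p : MvPolynomial ℕ+ ℂ) :
    (c • X b) * pderiv a p - pderiv a ((c • X b) * p)
      = (-(if a = b then (c : ℂ) else 0)) • p := by
  rw [neg_smul, ← pderiv_smulX_comm a b c p]; ring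

/-- The Fock representation of the Heisenberg generators on `ℂ[x₁, x₂, …]`:
`ρ n = ∂/∂xₙ` for `n > 0`, `ρ (-n)` is multiplication by `n • Xₙ` for `n > 0`,
and `ρ 0 = 0`. -/
noncomputable def fockRep (n : ℤ) : Module.End ℂ (MvPolynomial ℕ+ ℂ) :=
  if h : 0 < n then
    (MvPolynomial.pderiv (⟨n.toNat, by omega⟩ : ℕ+)).toLinearMap
  else if h' : n < 0 then
    { toFun := fun p => ((-n).toNat • (X (⟨(-n).toNat, by omega⟩ : ℕ+) : MvPolynomial ℕ+ ℂ)) * p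
      map_add' := fun p q => mul_add _ p q
      map_smul' := fun c p => mul_smul_comm c _ p }
  else 0

lemma fockRep_pos_apply {n : ℤ} (hn : 0 < n) (p : MvPolynomial ℕ+ ℂ) :
    fockRep n p = pderiv (R := ℂ) (σ := ℕ+) ⟨n.toNat, by omega⟩ p := by
  unfold fockRep
  exact congrArg (fun f : Module.End ℂ (MvPolynomial ℕ+ ℂ) => f p) (dif_pos hn)

lemma fockRep_neg_apply {n : ℤ} (hn : n < 0) (p : MvPolynomial ℕ+ ℂ) :
    fockRep n p = ((-n).toNat • (X (⟨(-n).toNat, by omega⟩ : ℕ+) : MvPolynomial ℕ+ ℂ)) * p := by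
  unfold fockRep
  erw [dif_neg (show ¬ 0 < n by omega), dif_pos hn]
  rfl

lemma fockRep_zero : fockRep 0 = 0 := rfl

theorem fock_heisenberg_relations (n m : ℤ) :
    fockRep n ∘ₗ fockRep m - fockRep m ∘ₗ fockRep n =
      (if n + m = 0 then (n : ℂ) else 0) • LinearMap.id := by
  refine LinearMap.ext fun p => ?_
  rcases lt_trichotomy 0 n with hn | hn | hn
  · rcases lt_trichotomy 0 m with hm | hm | hm
    · have h0 : ¬ (n + m = 0) := by omega
      simp only [fockRep_pos_apply hn, fockRep_pos_apply hm, h0, if_false, zero_smul,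
        LinearMap.zero_apply, LinearMap.sub_apply, LinearMap.comp_apply]
      exact sub_eq_zero.mpr (pderiv_comm' _ _ p)
    · simp [fockRep_pos_apply hn, fockRep_zero, ← hm, show n ≠ 0 by omega]
    · -- n > 0, m < 0
      simp only [fockRep_pos_apply hn, fockRep_neg_apply hm,
        LinearMap.sub_apply, LinearMap.comp_apply, LinearMap.coe_mk, AddHom.coe_mk,
        LinearMap.smul_apply, LinearMap.id_coe, id_eq]
      refine (pderiv_smulX_comm ⟨n.toNat, by omega⟩ ⟨(-m).toNat, by omega⟩
        ((-m).toNat) p).trans ?_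
      have hiff : ((⟨n.toNat, by omega⟩ : ℕ+) = (⟨(-m).toNat, by omega⟩ : ℕ+)) ↔ n + m = 0 := by
        constructor
        · intro h; have := congrArg Subtype.val h; simp at this; omega
        · intro h; ext; simp; omega
      have hsc : (if (⟨n.toNat, by omega⟩ : ℕ+) = (⟨(-m).toNat, by omega⟩ : ℕ+)
          then ((-m).toNat : ℂ) else 0) = (if n + m = 0 then (n : ℂ) else 0) := by
        by_cases h : n + m = 0
        · rw [if_pos (hiff.mpr h), if_pos h]
          have hh : ((-m).toNat : ℤ) = n := by omega
          calc ((-m).toNat : ℂ) = ((((-m).toNat : ℤ)) : ℂ) := by push_cast; ring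
            _ = (n : ℂ) := by rw [hh]
        · rw [if_neg (fun hc => h (hiff.mp hc)), if_neg h]
      exact congrArg (fun c : ℂ => c • p) hsc
  · rcases lt_trichotomy 0 m with hm | hm | hm
    · simp [fockRep_pos_apply hm, fockRep_zero, ← hn, show m ≠ 0 by omega]
    · simp [fockRep_zero, ← hn, ← hm]
    · simp [fockRep_neg_apply hm, fockRep_zero, ← hn, show m ≠ 0 by omega]
  · rcases lt_trichotomy 0 m with hm | hm | hm
    · -- n < 0, m > 0
      simp only [fockRep_pos_apply hm, fockRep_neg_apply hn,
        LinearMap.sub_apply, LinearMap.comp_apply, LinearMap.coe_mk, AddHom.coe_mk,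
        LinearMap.smul_apply, LinearMap.id_coe, id_eq]
      refine (pderiv_smulX_comm_neg ⟨m.toNat, by omega⟩ ⟨(-n).toNat, by omega⟩
        ((-n).toNat) p).trans ?_
      have hiff : ((⟨m.toNat, by omega⟩ : ℕ+) = (⟨(-n).toNat, by omega⟩ : ℕ+)) ↔ n + m = 0 := by
        constructor
        · intro h; have := congrArg Subtype.val h; simp at this; omega
        · intro h; ext; simp; omega
      have hsc : (-(if (⟨m.toNat, by omega⟩ : ℕ+) = (⟨(-n).toNat, by omega⟩ : ℕ+)
          then ((-n).toNat : ℂ) else 0)) = (if n + m = 0 then (n : ℂ) else 0) := by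
        by_cases h : n + m = 0
        · rw [if_pos (hiff.mpr h), if_pos h]
          have hh : ((-n).toNat : ℤ) = -n := by omega
          calc -(((-n).toNat : ℂ)) = -((((-n).toNat : ℤ)) : ℂ) := by push_cast; ring
            _ = (n : ℂ) := by rw [hh]; push_cast; ring
        · rw [if_neg (fun hc => h (hiff.mp hc)), if_neg h, neg_zero]
      exact congrArg (fun c : ℂ => c • p) hsc
    · simp [fockRep_neg_apply hn, fockRep_zero, ← hm, show n ≠ 0 by omega]
    · -- both multiplications
      have h0 : ¬ (n + m = 0) := by omega
      simp only [fockRep_neg_apply hn, fockRep_neg_apply hm, LinearMap.sub_apply, LinearMap.comp_apply,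
        LinearMap.coe_mk, AddHom.coe_mk, h0, if_false, zero_smul, LinearMap.zero_apply]
      exact sub_eq_zero.mpr (mul_left_comm _ _ _)
end

section
/- Irreducibility of the Fock representation: if N is a ℂ-submodule of MvPolynomial ℕ+ ℂ such that for every p ∈ N and every index i : ℕ+ both pderiv i p ∈ N and X_i * p ∈ N, then N = ⊥ or N = ⊤. -/
open MvPolynomial

private lemma coeff_pderiv_aux (i : ℕ+) (m : ℕ+ →₀ ℕ) (p : MvPolynomial ℕ+ ℂ) :
    coeff m (pderiv i p) = ((m i : ℂ) + 1) * coeff (m + Finsupp.single i 1) p := by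
  classical
  induction p using MvPolynomial.induction_on' with
  | add p q hp hq =>
      simp [map_add, coeff_add, hp, hq]; ring
  | monomial s a =>
      rw [pderiv_monomial, coeff_monomial, coeff_monomial]
      by_cases h : s = m + Finsupp.single i 1
      · subst h
        rw [if_pos (add_tsub_cancel_right m (Finsupp.single i 1))]
        simp [Finsupp.single_apply]
        ring
      · rw [if_neg h]
        by_cases h2 : s - Finsupp.single i 1 = m
        · rw [if_pos h2]
          by_cases hsi : s i = 0
          · simp [hsi]
          · exfalso
            apply h
            rw [← h2, tsub_add_cancel_of_le]
            exact Finsupp.single_le_iff.2 (Nat.one_le_iff_ne_zero.2 hsi)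
        · rw [if_neg h2]
          ring

private lemma exists_pderiv_lt (p : MvPolynomial ℕ+ ℂ) (hp : p ≠ 0)
    (hd : p.totalDegree ≠ 0) :
    ∃ i : ℕ+, pderiv i p ≠ 0 ∧ (pderiv i p).totalDegree < p.totalDegree := by
  classical
  obtain ⟨d, hds, hdsum⟩ := Finset.exists_mem_eq_sup p.support
    (support_nonempty.2 hp) (fun s => s.sum fun _ e => e)
  have hdne : d ≠ 0 := by
    intro h
    apply hd
    have h2 : p.totalDegree = d.sum fun _ e => e := hdsum
    rw [h, Finsupp.sum_zero_index] at h2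
    exact h2
  obtain ⟨i, hi⟩ := Finsupp.ne_iff.1 hdne
  simp only [Finsupp.coe_zero, Pi.zero_apply] at hi
  have hle : Finsupp.single i 1 ≤ d := Finsupp.single_le_iff.2 (Nat.one_le_iff_ne_zero.2 hi)
  have key : coeff (d - Finsupp.single i 1) (pderiv i p) ≠ 0 := by
    rw [coeff_pderiv_aux, tsub_add_cancel_of_le hle]
    have h1 : coeff d p ≠ 0 := mem_support_iff.1 hds
    exact mul_ne_zero (Nat.cast_add_one_ne_zero _) h1
  refine ⟨i, fun h => key (by simp [h]), ?_⟩
  rw [MvPolynomial.totalDegree]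
  apply Finset.sup_lt_iff (by exact Nat.pos_of_ne_zero hd) |>.2
  intro m hm
  have hc : coeff m (pderiv i p) ≠ 0 := mem_support_iff.1 hm
  rw [coeff_pderiv_aux] at hc
  have hmem : m + Finsupp.single i 1 ∈ p.support := by
    rw [mem_support_iff]
    intro h
    exact hc (by simp [h])
  have := le_totalDegree hmem
  have hsum : ((m + Finsupp.single i 1).sum fun _ e => e) = (m.sum fun _ e => e) + 1 := by
    rw [Finsupp.sum_add_index (fun _ _ => rfl) (fun _ _ _ _ => rfl)]
    simp [Finsupp.sum_single_index]
  omega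

private lemma one_mem_of_ne_zero (N : Submodule ℂ (MvPolynomial ℕ+ ℂ))
    (hN : ∀ p ∈ N, ∀ i : ℕ+, pderiv i p ∈ N ∧ X i * p ∈ N) :
    ∀ n : ℕ, ∀ p : MvPolynomial ℕ+ ℂ, p ∈ N → p ≠ 0 → p.totalDegree = n →
      (1 : MvPolynomial ℕ+ ℂ) ∈ N := by
  intro n
  induction n using Nat.strong_induction_on with
  | _ n ih =>
    intro p hpN hp hdeg
    by_cases hn : n = 0
    · subst hn
      classical
      have hc : coeff 0 p ≠ 0 := by
        intro h
        apply hp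
        ext d
        by_cases hd : d = 0
        · subst hd; simpa using h
        · rw [coeff_zero]
          by_contra hcd
          have hds : d ∈ p.support := mem_support_iff.2 hcd
          have := (totalDegree_eq_zero_iff ℕ+ p).1 hdeg d hds
          exact hd (Finsupp.ext fun x => this x)
      have hCp : p = C (coeff 0 p) := by
        ext d
        by_cases hd : d = 0
        · subst hd; simp
        · rw [coeff_C, if_neg (fun h => hd h.symm)]
          by_contra hcd
          have hds : d ∈ p.support := mem_support_iff.2 hcd
          have := (totalDegree_eq_zero_iff ℕ+ p).1 hdeg d hds
          exact hd (Finsupp.ext fun x => this x)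
      set c := coeff 0 p with hc'
      have : c⁻¹ • p ∈ N := N.smul_mem _ hpN
      have heq : c⁻¹ • p = 1 := by
        rw [hCp, smul_eq_C_mul, ← C_mul, inv_mul_cancel₀ hc, C_1]
      rwa [heq] at this
    · obtain ⟨i, hne, hlt⟩ := exists_pderiv_lt p hp (hdeg ▸ hn)
      exact ih (pderiv i p).totalDegree (hdeg ▸ hlt) (pderiv i p)
        ((hN p hpN i).1) hne rfl

theorem fock_representation_irreducible (N : Submodule ℂ (MvPolynomial ℕ+ ℂ))
    (hN : ∀ p ∈ N, ∀ i : ℕ+, pderiv i p ∈ N ∧ X i * p ∈ N) :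
    N = ⊥ ∨ N = ⊤ := by
  by_cases hbot : N = ⊥
  · exact Or.inl hbot
  right
  obtain ⟨p, hpN, hp⟩ := Submodule.exists_mem_ne_zero_of_ne_bot hbot
  have h1 : (1 : MvPolynomial ℕ+ ℂ) ∈ N := one_mem_of_ne_zero N hN p.totalDegree p hpN hp rfl
  have hXpow : ∀ (q : MvPolynomial ℕ+ ℂ), q ∈ N → ∀ (i : ℕ+) (k : ℕ), X i ^ k * q ∈ N := by
    intro q hq i k
    induction k with
    | zero => simpa using hq
    | succ k ihk =>
        have := (hN _ ihk i).2
        rwa [← mul_assoc, mul_comm (X i) (X i ^ k), ← pow_succ] at this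
  have hmono : ∀ d : ℕ+ →₀ ℕ, monomial d (1 : ℂ) ∈ N := by
    intro d
    induction d using Finsupp.induction with
    | zero => simpa using h1
    | single_add a b f _ _ ihf =>
        have : monomial (Finsupp.single a b + f) (1 : ℂ) = X a ^ b * monomial f 1 := by
          rw [X_pow_eq_monomial, monomial_mul, one_mul]
        rw [this]
        exact hXpow _ ihf a b
  rw [Submodule.eq_top_iff']
  intro q
  rw [q.as_sum]
  apply Submodule.sum_mem
  intro v _
  have : monomial v (coeff v q) = (coeff v q) • monomial v (1 : ℂ) := by
    rw [smul_monomial, smul_eq_mul, mul_one]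
  rw [this]
  exact N.smul_mem _ (hmono v)
end
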